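/- Let n ≥ 2, let β_1,…,β_{n−1} ∈ (0,1], and let A_1 be the n×n real matrix with (A_1)_{st} = 1 if s = t or t = n, (A_1)_{st} = −β_t^{-1} if s > t and t < n, and (A_1)_{st} = 0 otherwise. Perform GE on A_1 with the diagonal pivots (1,1), (2,2), …, (n−1,n−1). Then at each step k (1 ≤ k ≤ n−1) the pivot quality in the sense of partial pivoting equals β_k, i.e., |A^{(k−1)}_{kk}| / max_{1 ≤ s ≤ n} |A^{(k−1)}_{sk}| = β_k. -/
import Mathlib


open Finset Real

/-- One Gaussian elimination step on `A` with pivot position `(i, j)`: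
`A_{st} - A_{sj} A_{it} / A_{ij}`. -/
noncomputable def geStep {m n : ℕ} (A : Matrix (Fin m) (Fin n) ℝ) (i : Fin m) (j : Fin n) :
    Matrix (Fin m) (Fin n) ℝ :=
  Matrix.of fun s t => A s t - A s j * A i t / A i j

/-- The matrix `A^{(r)}` after `r` GE steps on `A`, where step `r` uses pivot
position `piv (r - 1)` (so `piv` is 0-indexed). -/
noncomputable def geIter {m n : ℕ} (A : Matrix (Fin m) (Fin n) ℝ)
    (piv : ℕ → Fin m × Fin n) : ℕ → Matrix (Fin m) (Fin n) ℝ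
  | 0 => A
  | r + 1 => geStep (geIter A piv r) (piv r).1 (piv r).2

/-- Maximum absolute entry of a matrix. -/
noncomputable def maxAbs {m n : ℕ} (A : Matrix (Fin m) (Fin n) ℝ) : ℝ :=
  ⨆ s, ⨆ t, |A s t|

/-- The magnitude `p_r = |A^{(r-1)}_{i_r j_r}|` of the `r`-th pivot (1-indexed `r`). -/
noncomputable def pivMag {m n : ℕ} (A : Matrix (Fin m) (Fin n) ℝ)
    (piv : ℕ → Fin m × Fin n) (r : ℕ) : ℝ :=
  |geIter A piv (r - 1) (piv (r - 1)).1 (piv (r - 1)).2|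

/-- Modified Wilkinson matrix `A₁`: `(A₁)_{st} = 1` if `s = t` or `t = n` (1-based),
`(A₁)_{st} = -β_t⁻¹` if `s > t` and `t < n`, and `0` otherwise. Here indices are
0-based, so column `t` (0-based) corresponds to `β (t+1)`. -/
noncomputable def wilkA1 (n : ℕ) (β : ℕ → ℝ) : Matrix (Fin n) (Fin n) ℝ :=
  Matrix.of fun s t =>
    if (s : ℕ) = (t : ℕ) ∨ (t : ℕ) = n - 1 then 1
    else if (t : ℕ) < (s : ℕ) then -(β ((t : ℕ) + 1))⁻¹ else 0

/-- Diagonal pivot positions `(1,1), (2,2), …` (0-based: `(r, r)` at step `r + 1`). -/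
def diagPiv (n : ℕ) (hn : 0 < n) : ℕ → Fin n × Fin n :=
  fun r => (⟨min r (n - 1), by omega⟩, ⟨min r (n - 1), by omega⟩)

/-- Explicit form of the GE iterates of the modified Wilkinson matrix. -/
noncomputable def wilkM (n : ℕ) (β : ℕ → ℝ) (r : ℕ) : Matrix (Fin n) (Fin n) ℝ :=
  Matrix.of fun s t =>
    if (s : ℕ) < r ∨ (t : ℕ) < r then 0
    else if (t : ℕ) = n - 1 then ∏ j ∈ Finset.range r, (1 + (β (j + 1))⁻¹)
    else if (s : ℕ) = (t : ℕ) then 1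
    else if (t : ℕ) < (s : ℕ) then -(β ((t : ℕ) + 1))⁻¹ else 0

section entries
variable {n : ℕ} {β : ℕ → ℝ} {r : ℕ} {s t : Fin n}

lemma wilkM_zero (h : (s : ℕ) < r ∨ (t : ℕ) < r) : wilkM n β r s t = 0 := by
  simp only [wilkM, Matrix.of_apply]; rw [if_pos h]

lemma wilkM_last (h1 : ¬ ((s : ℕ) < r ∨ (t : ℕ) < r)) (h2 : (t : ℕ) = n - 1) :
    wilkM n β r s t = ∏ j ∈ Finset.range r, (1 + (β (j + 1))⁻¹) := by
  simp only [wilkM, Matrix.of_apply]; rw [if_neg h1, if_pos h2]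

lemma wilkM_diag (h1 : ¬ ((s : ℕ) < r ∨ (t : ℕ) < r)) (h2 : (t : ℕ) ≠ n - 1)
    (h3 : (s : ℕ) = (t : ℕ)) : wilkM n β r s t = 1 := by
  simp only [wilkM, Matrix.of_apply]; rw [if_neg h1, if_neg h2, if_pos h3]

lemma wilkM_below (h1 : ¬ ((s : ℕ) < r ∨ (t : ℕ) < r)) (h2 : (t : ℕ) ≠ n - 1)
    (h3 : (t : ℕ) < (s : ℕ)) : wilkM n β r s t = -(β ((t : ℕ) + 1))⁻¹ := by
  simp only [wilkM, Matrix.of_apply]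
  rw [if_neg h1, if_neg h2, if_neg (by omega), if_pos h3]

lemma wilkM_above (h1 : ¬ ((s : ℕ) < r ∨ (t : ℕ) < r)) (h2 : (t : ℕ) ≠ n - 1)
    (h3 : (s : ℕ) < (t : ℕ)) : wilkM n β r s t = 0 := by
  simp only [wilkM, Matrix.of_apply]
  rw [if_neg h1, if_neg h2, if_neg (by omega), if_neg (by omega)]

lemma wilkM_succ_eq (h1 : r < (s : ℕ)) (h2 : r < (t : ℕ)) (h3 : (t : ℕ) ≠ n - 1) :
    wilkM n β (r + 1) s t = wilkM n β r s t := by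
  simp only [wilkM, Matrix.of_apply]
  split_ifs <;> first | rfl | omega

end entries

lemma geIter_wilk (n : ℕ) (hn : 2 ≤ n) (β : ℕ → ℝ) (h0 : 0 < n) :
    ∀ r, r ≤ n - 2 → geIter (wilkA1 n β) (diagPiv n h0) r = wilkM n β r := by
  intro r
  induction r with
  | zero =>
    intro _
    ext s t
    simp only [geIter, wilkA1, wilkM, Matrix.of_apply]
    split_ifs <;> first | rfl | omega | simp_all
  | succ r ih =>
    intro hr
    have hrn : r < n - 1 := by omega
    have hmin : min r (n - 1) = r := by omega
    have key : geIter (wilkA1 n β) (diagPiv n h0) (r + 1)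
        = geStep (wilkM n β r) ⟨r, by omega⟩ ⟨r, by omega⟩ := by
      show geStep (geIter (wilkA1 n β) (diagPiv n h0) r) _ _ = _
      rw [ih (by omega)]
      congr 1 <;> simp [diagPiv, Fin.ext_iff, hmin]
    rw [key]
    ext s t
    simp only [geStep, Matrix.of_apply]
    set i : Fin n := ⟨r, by omega⟩ with hi
    have hiv : (i : ℕ) = r := rfl
    have hPrr : wilkM n β r i i = 1 := wilkM_diag (by omega) (by omega) rfl
    rw [hPrr, div_one]
    rcases Nat.lt_trichotomy (s : ℕ) r with hs | hs | hs
    · rw [wilkM_zero (Or.inl hs), wilkM_zero (Or.inl hs),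
        wilkM_zero (Or.inl (by omega : (s : ℕ) < r + 1))]
      ring
    · have hsi : s = i := Fin.ext (by omega)
      subst hsi
      rw [wilkM_diag (by omega) (by omega) rfl, one_mul,
        wilkM_zero (Or.inl (by omega : (i : ℕ) < r + 1))]
      ring
    · rcases Nat.lt_trichotomy (t : ℕ) r with ht | ht | ht
      · rw [wilkM_zero (Or.inr ht), wilkM_zero (Or.inr ht),
          wilkM_zero (Or.inr (by omega : (t : ℕ) < r + 1))]
        ring
      · have hti : t = i := Fin.ext (by omega)
        subst hti
        rw [wilkM_diag (by omega) (by omega) rfl, mul_one,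
          wilkM_zero (Or.inr (by omega : (i : ℕ) < r + 1))]
        ring
      · by_cases htn : (t : ℕ) = n - 1
        · rw [wilkM_last (by omega) htn, wilkM_last (by omega) htn,
            wilkM_below (by omega) (by omega) (by omega),
            wilkM_last (by omega) htn, Finset.prod_range_succ]
          ring
        · rw [wilkM_above (by omega) htn (by omega : (i : ℕ) < (t : ℕ)),
            mul_zero, wilkM_succ_eq hs ht htn]
          ring

/-- **Pivot qualities of partial pivoting on `A₁`.** Performing GE on `A₁` with the
diagonal pivots, at each step `k` (1-based) the partial-pivoting pivot quality equals
`β_k`: `|A^{(k-1)}_{kk}| / max_{1 ≤ s ≤ n} |A^{(k-1)}_{sk}| = β_k`. -/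
theorem wilkA1_pivot_quality
    (n : ℕ) (hn : 2 ≤ n) (β : ℕ → ℝ)
    (hβ : ∀ r, 1 ≤ r → r ≤ n - 1 → 0 < β r ∧ β r ≤ 1)
    (k : ℕ) (hk1 : 1 ≤ k) (hk2 : k ≤ n - 1) :
    |geIter (wilkA1 n β) (diagPiv n (by omega)) (k - 1)
        ⟨k - 1, by omega⟩ ⟨k - 1, by omega⟩| /
      (⨆ s : Fin n,
        |geIter (wilkA1 n β) (diagPiv n (by omega)) (k - 1) s ⟨k - 1, by omega⟩|) =
      β k := by
  obtain ⟨hβ0, hβ1⟩ := hβ k hk1 hk2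
  haveI : Nonempty (Fin n) := ⟨⟨0, by omega⟩⟩
  have hinv1 : 1 ≤ (β k)⁻¹ := (one_le_inv₀ hβ0).mpr hβ1
  have hinv0 : 0 ≤ (β k)⁻¹ := by positivity
  have hE : geIter (wilkA1 n β) (diagPiv n (by omega)) (k - 1) = wilkM n β (k - 1) :=
    geIter_wilk n hn β (by omega) (k - 1) (by omega)
  rw [hE]
  set t0 : Fin n := ⟨k - 1, by omega⟩ with ht0
  have ht0v : (t0 : ℕ) = k - 1 := rfl
  have hkk : k - 1 + 1 = k := by omega
  have hcol : ∀ s : Fin n, |wilkM n β (k - 1) s t0| =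
      if (s : ℕ) < k - 1 then 0 else if (s : ℕ) = k - 1 then 1 else (β k)⁻¹ := by
    intro s
    rcases Nat.lt_trichotomy (s : ℕ) (k - 1) with hs | hs | hs
    · rw [wilkM_zero (Or.inl hs), if_pos hs, abs_zero]
    · rw [wilkM_diag (by omega) (by omega) hs, if_neg (by omega), if_pos hs, abs_one]
    · rw [wilkM_below (by omega) (by omega) hs, if_neg (by omega), if_neg (by omega),
        ht0v, hkk, abs_neg, abs_of_nonneg hinv0]
  have hsup : (⨆ s : Fin n, |wilkM n β (k - 1) s t0|) = (β k)⁻¹ := by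
    apply le_antisymm
    · apply ciSup_le
      intro s
      rw [hcol s]
      split_ifs
      · exact hinv0
      · exact hinv1
      · exact le_rfl
    · set sk : Fin n := ⟨k, by omega⟩ with hsk
      have hskv : (sk : ℕ) = k := rfl
      have hle := le_ciSup (f := fun s : Fin n => |wilkM n β (k - 1) s t0|)
        (Finite.bddAbove_range _) sk
      rwa [hcol sk, if_neg (by omega), if_neg (by omega)] at hle
  rw [hsup, hcol t0, if_neg (by omega), if_pos ht0v, one_div, inv_inv]
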